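/- (Corollary 3.1(d).) If X is independent of (R(1),R(0)), and in addition either (i) (Y(1),Y(0)) is independent of (R(1),R(0)), or (ii) (Y(1),Y(0)) is conditionally independent of (R(1),R(0)) given X, then theta_drop = theta = E[Y(1) - Y(0)]. -/

import Mathlib

open MeasureTheory ProbabilityTheory

theorem corollary_3_1_d
    {Ω : Type*} [MeasurableSpace Ω] [StandardBorelSpace Ω] [Nonempty Ω]
    (μ : Measure Ω) [IsProbabilityMeasure μ]
    {k : ℕ} (Y : Fin 2 → Ω → ℝ) (R : Fin 2 → Ω → ℝ) (X : Ω → Fin k → ℝ)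
    (hYmeas : ∀ d, Measurable (Y d)) (hRmeas : ∀ d, Measurable (R d))
    (hXmeas : Measurable X)
    (hR01 : ∀ d ω, R d ω = 0 ∨ R d ω = 1)
    (hYint : ∀ d, Integrable (Y d) μ)
    (hRpos : ∀ d, 0 < ∫ ω, R d ω ∂μ)
    (hle : MeasurableSpace.comap X inferInstance ≤ ‹MeasurableSpace Ω›)
    (r : Fin 2 → (Fin k → ℝ) → ℝ) (yr : Fin 2 → (Fin k → ℝ) → ℝ)
    (hr : ∀ d, μ[R d | MeasurableSpace.comap X inferInstance]
      =ᵐ[μ] fun ω => r d (X ω))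
    (hyr : ∀ d, μ[fun ω => Y d ω * R d ω | MeasurableSpace.comap X inferInstance]
      =ᵐ[μ] fun ω => yr d (X ω))
    (hdenpos : 0 < ∫ ω, r 1 (X ω) * r 0 (X ω) ∂μ)
    (hindepX : IndepFun X (fun ω => (R 1 ω, R 0 ω)) μ)
    (heither : IndepFun (fun ω => (Y 1 ω, Y 0 ω)) (fun ω => (R 1 ω, R 0 ω)) μ ∨
      CondIndepFun (MeasurableSpace.comap X inferInstance) hle
        (fun ω => (Y 1 ω, Y 0 ω)) (fun ω => (R 1 ω, R 0 ω)) μ) :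
    ((∫ ω, yr 1 (X ω) * r 0 (X ω) ∂μ) - ∫ ω, yr 0 (X ω) * r 1 (X ω) ∂μ)
        / (∫ ω, r 1 (X ω) * r 0 (X ω) ∂μ)
      = ∫ ω, (Y 1 ω - Y 0 ω) ∂μ := by
  classical
  set Rp : Ω → ℝ × ℝ := fun ω => (R 1 ω, R 0 ω) with hRpdef
  set W : Ω → ℝ × ℝ := fun ω => (Y 1 ω, Y 0 ω) with hWdef
  have hRpMeas : Measurable Rp := (hRmeas 1).prodMk (hRmeas 0)
  have hWMeas : Measurable W := (hYmeas 1).prodMk (hYmeas 0)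
  haveI : IsFiniteMeasure (μ.trim hle) := isFiniteMeasure_trim hle
  -- R d is measurable w.r.t. comap Rp
  have hRpself : Measurable[MeasurableSpace.comap Rp inferInstance] Rp :=
    measurable_iff_comap_le.2 le_rfl
  have hRcm : ∀ d, Measurable[MeasurableSpace.comap Rp inferInstance] (R d) := by
    intro d
    fin_cases d
    · exact measurable_snd.comp hRpself
    · exact measurable_fst.comp hRpself
  -- independence of sigma algebras
  have hIndepXR : Indep (MeasurableSpace.comap Rp inferInstance) (MeasurableSpace.comap X inferInstance) μ :=
    ((IndepFun_iff_Indep _ _ _).1 hindepX).symm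
  -- r d (X ·) is a.e. the constant ∫ R d
  have hc : ∀ d, (fun ω => r d (X ω)) =ᵐ[μ] fun _ => ∫ ω, R d ω ∂μ := by
    intro d
    exact (hr d).symm.trans
      (condExp_indep_eq hRpMeas.comap_le hle (hRcm d).stronglyMeasurable hIndepXR)
  -- integrability
  have hRint : ∀ d, Integrable (R d) μ := by
    intro d
    refine (integrable_const (1 : ℝ)).mono' (hRmeas d).aestronglyMeasurable ?_
    refine Filter.Eventually.of_forall fun ω => ?_
    rcases hR01 d ω with h | h <;> simp [h]
  have hYRint : ∀ d, Integrable (fun ω => Y d ω * R d ω) μ := by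
    intro d
    refine (hYint d).norm.mono' ((hYmeas d).mul (hRmeas d)).aestronglyMeasurable ?_
    refine Filter.Eventually.of_forall fun ω => ?_
    rcases hR01 d ω with h | h <;> simp [h, abs_nonneg]
  -- reduce case (ii) to case (i)
  have hWR : IndepFun W Rp μ := by
    rcases heither with h | h
    · exact h
    · rw [IndepFun_iff]
      intro s t hs ht
      have hsm : MeasurableSet s := hWMeas.comap_le _ hs
      have htm : MeasurableSet t := hRpMeas.comap_le _ ht
      have h1 : (μ⟦s ∩ t | MeasurableSpace.comap X inferInstance⟧) =ᵐ[μ] (μ⟦s | MeasurableSpace.comap X inferInstance⟧) * (μ⟦t | MeasurableSpace.comap X inferInstance⟧) :=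
        (condIndepFun_iff _ _ _ _ hWMeas hRpMeas μ).1 h s t hs ht
      have h2 : (μ⟦t | MeasurableSpace.comap X inferInstance⟧) =ᵐ[μ] fun _ => (μ t).toReal := by
        have := condExp_indep_eq hRpMeas.comap_le hle
          (stronglyMeasurable_const.indicator ht :
            StronglyMeasurable[MeasurableSpace.comap Rp inferInstance]
              (t.indicator (fun _ => (1 : ℝ)))) hIndepXR
        refine this.trans ?_
        refine Filter.Eventually.of_forall fun ω => ?_
        rw [integral_indicator htm]; simp [measureReal_def]
      have h3 : (μ⟦s ∩ t | MeasurableSpace.comap X inferInstance⟧) =ᵐ[μ] fun ω => (μ⟦s | MeasurableSpace.comap X inferInstance⟧) ω * (μ t).toReal := by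
        filter_upwards [h1, h2] with ω hω1 hω2
        simp only [Pi.mul_apply] at hω1
        rw [hω1, hω2]
      have hint_st : Integrable ((s ∩ t).indicator (fun _ => (1 : ℝ))) μ :=
        (integrable_const (1 : ℝ)).indicator (hsm.inter htm)
      have hint_s : Integrable (s.indicator (fun _ => (1 : ℝ))) μ :=
        (integrable_const (1 : ℝ)).indicator hsm
      have hEq : (μ (s ∩ t)).toReal = (μ s).toReal * (μ t).toReal := by
        calc (μ (s ∩ t)).toReal
            = ∫ ω, (s ∩ t).indicator (fun _ => (1 : ℝ)) ω ∂μ := by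
              rw [integral_indicator (hsm.inter htm)]; simp [measureReal_def]
          _ = ∫ ω, (μ⟦s ∩ t | MeasurableSpace.comap X inferInstance⟧) ω ∂μ := (integral_condExp hle).symm
          _ = ∫ ω, (μ⟦s | MeasurableSpace.comap X inferInstance⟧) ω * (μ t).toReal ∂μ := integral_congr_ae h3
          _ = (∫ ω, (μ⟦s | MeasurableSpace.comap X inferInstance⟧) ω ∂μ) * (μ t).toReal := integral_mul_const _ _
          _ = (∫ ω, s.indicator (fun _ => (1 : ℝ)) ω ∂μ) * (μ t).toReal := by
              rw [integral_condExp hle]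
          _ = (μ s).toReal * (μ t).toReal := by rw [integral_indicator hsm]; simp [measureReal_def]
      refine (ENNReal.toReal_eq_toReal_iff' (measure_ne_top μ _)
        (ENNReal.mul_ne_top (measure_ne_top μ s) (measure_ne_top μ t))).1 ?_
      rw [ENNReal.toReal_mul]; exact hEq
  -- independence of Y d and R d
  have hYRindep : ∀ d, IndepFun (Y d) (R d) μ := by
    intro d
    fin_cases d
    · exact hWR.comp measurable_snd measurable_snd
    · exact hWR.comp measurable_fst measurable_fst
  have hEYR : ∀ d, ∫ ω, Y d ω * R d ω ∂μ = (∫ ω, Y d ω ∂μ) * (∫ ω, R d ω ∂μ) :=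
    fun d => (hYRindep d).integral_mul_eq_mul_integral (hYint d).1 (hRint d).1
  -- numerator terms
  have key : ∀ d d', ∫ ω, yr d (X ω) * r d' (X ω) ∂μ
      = (∫ ω, Y d ω ∂μ) * (∫ ω, R d ω ∂μ) * (∫ ω, R d' ω ∂μ) := by
    intro d d'
    have h1 : (fun ω => yr d (X ω) * r d' (X ω)) =ᵐ[μ]
        fun ω => (μ[fun ω => Y d ω * R d ω | MeasurableSpace.comap X inferInstance]) ω * (∫ ω, R d' ω ∂μ) := by
      filter_upwards [hyr d, hc d'] with ω h1 h2
      rw [← h1, h2]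
    rw [integral_congr_ae h1, integral_mul_const, integral_condExp hle, hEYR d]
  have hden : ∫ ω, r 1 (X ω) * r 0 (X ω) ∂μ = (∫ ω, R 1 ω ∂μ) * (∫ ω, R 0 ω ∂μ) := by
    have h1 : (fun ω => r 1 (X ω) * r 0 (X ω)) =ᵐ[μ]
        fun _ => (∫ ω, R 1 ω ∂μ) * (∫ ω, R 0 ω ∂μ) := by
      filter_upwards [hc 1, hc 0] with ω h1 h2
      rw [h1, h2]
    rw [integral_congr_ae h1, integral_const, probReal_univ]
    simp
  have hc1 : (∫ ω, R 1 ω ∂μ) ≠ 0 := ne_of_gt (hRpos 1)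
  have hc0 : (∫ ω, R 0 ω ∂μ) ≠ 0 := ne_of_gt (hRpos 0)
  rw [key 1 0, key 0 1, hden, integral_sub (hYint 1) (hYint 0)]
  field_simp
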